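/- (Fourier–Motzkin elimination for cones) Let Y = {y₁, …, y_s} be a finite set of vectors in ℝᵈ, let C = cone(Y), and fix k with 1 ≤ k ≤ d. Let H_k = {y ∈ ℝᵈ : y_k = 0} and define Y^{/k} = {yᵢ : y_{ik} = 0} ∪ {y_{ik}·yⱼ − y_{jk}·yᵢ : y_{ik} > 0 and y_{jk} < 0}. Then C ∩ H_k = cone(Y^{/k}). -/

import Mathlib

open RealInnerProductSpace

open RealInnerProductSpace

/-- The cone (set of nonnegative linear combinations) generated by the vectors
`y 0, …, y (s-1)`. -/
def coneOf {d s : ℕ} (y : Fin s → EuclideanSpace ℝ (Fin d)) :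
    Set (EuclideanSpace ℝ (Fin d)) :=
  {x | ∃ t : Fin s → ℝ, (∀ i, 0 ≤ t i) ∧ x = ∑ i, t i • y i}

/-- The cone (set of nonnegative linear combinations) of a set `S` of vectors. -/
def setCone {d : ℕ} (S : Set (EuclideanSpace ℝ (Fin d))) :
    Set (EuclideanSpace ℝ (Fin d)) :=
  {x | ∃ (m : ℕ) (c : Fin m → ℝ) (z : Fin m → EuclideanSpace ℝ (Fin d)),
    (∀ i, 0 ≤ c i) ∧ (∀ i, z i ∈ S) ∧ x = ∑ i, c i • z i}

section aux
variable {d : ℕ} {S : Set (EuclideanSpace ℝ (Fin d))}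

lemma setCone_zero : (0 : EuclideanSpace ℝ (Fin d)) ∈ setCone S :=
  ⟨0, fun i => i.elim0, fun i => i.elim0, fun i => i.elim0, fun i => i.elim0, by simp⟩

lemma setCone_add {x₁ x₂ : EuclideanSpace ℝ (Fin d)} (hx : x₁ ∈ setCone S)
    (hy : x₂ ∈ setCone S) : x₁ + x₂ ∈ setCone S := by
  obtain ⟨m, c, z, hc, hz, rfl⟩ := hx
  obtain ⟨n, c', z', hc', hz', rfl⟩ := hy
  refine ⟨m + n, Fin.append c c', Fin.append z z', ?_, ?_, ?_⟩
  · intro i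
    refine Fin.addCases (fun i => ?_) (fun i => ?_) i <;>
      simp [Fin.append_left, Fin.append_right, hc _, hc' _]
  · intro i
    refine Fin.addCases (fun i => ?_) (fun i => ?_) i <;>
      simp [Fin.append_left, Fin.append_right, hz _, hz' _]
  · rw [Fin.sum_univ_add]
    simp [Fin.append_left, Fin.append_right]

lemma setCone_single {c : ℝ} {z : EuclideanSpace ℝ (Fin d)} (hc : 0 ≤ c) (hz : z ∈ S) :
    c • z ∈ setCone S :=
  ⟨1, fun _ => c, fun _ => z, fun _ => hc, fun _ => hz, by simp⟩

lemma setCone_sum {ι : Type*} (s : Finset ι) (f : ι → EuclideanSpace ℝ (Fin d))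
    (h : ∀ i ∈ s, f i ∈ setCone S) : ∑ i ∈ s, f i ∈ setCone S := by
  classical
  induction s using Finset.cons_induction with
  | empty => simpa using setCone_zero
  | cons a s ha ih =>
    rw [Finset.sum_cons]
    exact setCone_add (h a (Finset.mem_cons_self a s))
      (ih fun i hi => h i (Finset.mem_cons_of_mem hi))

variable {s : ℕ} {y : Fin s → EuclideanSpace ℝ (Fin d)}

lemma coneOf_zero : (0 : EuclideanSpace ℝ (Fin d)) ∈ coneOf y :=
  ⟨0, fun _ => le_refl _, by simp⟩

lemma coneOf_add {x₁ x₂ : EuclideanSpace ℝ (Fin d)} (hx : x₁ ∈ coneOf y)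
    (hy : x₂ ∈ coneOf y) : x₁ + x₂ ∈ coneOf y := by
  obtain ⟨t, ht, rfl⟩ := hx
  obtain ⟨u, hu, rfl⟩ := hy
  exact ⟨t + u, fun i => add_nonneg (ht i) (hu i), by
    simp [add_smul, Finset.sum_add_distrib]⟩

lemma coneOf_smul {c : ℝ} {x : EuclideanSpace ℝ (Fin d)} (hc : 0 ≤ c) (hx : x ∈ coneOf y) :
    c • x ∈ coneOf y := by
  obtain ⟨t, ht, rfl⟩ := hx
  exact ⟨fun i => c * t i, fun i => mul_nonneg hc (ht i), by
    simp [Finset.smul_sum, smul_smul]⟩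

lemma coneOf_gen (i : Fin s) : y i ∈ coneOf y := by
  classical
  refine ⟨fun j => if j = i then 1 else 0, fun j => by positivity, ?_⟩
  simp [ite_smul]

lemma coneOf_sum {ι : Type*} (t : Finset ι) (f : ι → EuclideanSpace ℝ (Fin d))
    (h : ∀ i ∈ t, f i ∈ coneOf y) : ∑ i ∈ t, f i ∈ coneOf y := by
  classical
  induction t using Finset.cons_induction with
  | empty => simpa using coneOf_zero
  | cons a t ha ih =>
    rw [Finset.sum_cons]
    exact coneOf_add (h a (Finset.mem_cons_self a t))
      (ih fun i hi => h i (Finset.mem_cons_of_mem hi))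

end aux

/-- (Fourier–Motzkin elimination for cones.) If `C = cone{y₁, …, y_s} ⊆ ℝᵈ` then
the intersection of `C` with the hyperplane `H_k = {y | y_k = 0}` is the cone
generated by `Y^{/k} = {yᵢ : y_{ik} = 0} ∪ {y_{ik}·yⱼ − y_{jk}·yᵢ : y_{ik} > 0, y_{jk} < 0}`. -/
theorem fourier_motzkin_elimination (d s : ℕ)
    (y : Fin s → EuclideanSpace ℝ (Fin d)) (k : Fin d) :
    coneOf y ∩ {x : EuclideanSpace ℝ (Fin d) | x k = 0} =
      setCone ({z | ∃ i, y i k = 0 ∧ z = y i} ∪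
        {z | ∃ i j, 0 < y i k ∧ y j k < 0 ∧
          z = (y i k) • y j - (y j k) • y i}) := by
  classical
  set S : Set (EuclideanSpace ℝ (Fin d)) :=
    {z | ∃ i, y i k = 0 ∧ z = y i} ∪
      {z | ∃ i j, 0 < y i k ∧ y j k < 0 ∧
        z = (y i k) • y j - (y j k) • y i} with hS
  apply Set.Subset.antisymm
  · -- hard direction
    rintro x ⟨⟨t, ht, rfl⟩, hk⟩
    simp only [Set.mem_setOf_eq] at hk
    rw [WithLp.ofLp_sum, Finset.sum_apply] at hk
    simp only [PiLp.smul_apply, smul_eq_mul] at hk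
    set Z : Finset (Fin s) := Finset.univ.filter (fun i => y i k = 0) with hZ
    set P : Finset (Fin s) := Finset.univ.filter (fun i => 0 < y i k) with hP
    set N : Finset (Fin s) := Finset.univ.filter (fun i => y i k < 0) with hN
    have e1 : (Finset.univ.filter fun i => ¬ y i k = 0).filter (fun i => 0 < y i k) = P := by
      ext i
      simp only [Finset.mem_filter, Finset.mem_univ, true_and, hP]
      exact ⟨fun h => h.2, fun h => ⟨h.ne', h⟩⟩
    have e2 : (Finset.univ.filter fun i => ¬ y i k = 0).filter (fun i => ¬ 0 < y i k) = N := by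
      ext i
      simp only [Finset.mem_filter, Finset.mem_univ, true_and, hN]
      exact ⟨fun h => lt_of_le_of_ne (not_lt.1 h.2) h.1, fun h => ⟨h.ne, not_lt.2 h.le⟩⟩
    have hsplit : ∀ {M : Type} [AddCommMonoid M] (f : Fin s → M),
        ∑ i, f i = ∑ i ∈ Z, f i + (∑ i ∈ P, f i + ∑ i ∈ N, f i) := by
      intro M _ f
      rw [← Finset.sum_filter_add_sum_filter_not Finset.univ (fun i => y i k = 0) f,
        ← Finset.sum_filter_add_sum_filter_not
          (Finset.univ.filter fun i => ¬ y i k = 0) (fun i => 0 < y i k) f, e1, e2]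
    have hZmem : ∀ i ∈ Z, y i k = 0 := fun i hi => (Finset.mem_filter.1 hi).2
    have hPmem : ∀ i ∈ P, 0 < y i k := fun i hi => (Finset.mem_filter.1 hi).2
    have hNmem : ∀ i ∈ N, y i k < 0 := fun i hi => (Finset.mem_filter.1 hi).2
    have hZ0 : ∑ i ∈ Z, t i * y i k = 0 :=
      Finset.sum_eq_zero fun i hi => by rw [hZmem i hi, mul_zero]
    have hAB : ∑ i ∈ P, t i * y i k + ∑ i ∈ N, t i * y i k = 0 := by
      have := hsplit (fun i => t i * y i k)
      rw [hk, hZ0, zero_add] at this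
      exact this.symm
    set A : ℝ := ∑ i ∈ P, t i * y i k with hA
    have hAnn : 0 ≤ A :=
      Finset.sum_nonneg fun i hi => mul_nonneg (ht i) (hPmem i hi).le
    have hBA : ∑ i ∈ N, t i * y i k = -A := by linarith
    -- membership of the Z part
    have hZcone : ∑ i ∈ Z, t i • y i ∈ setCone S := by
      refine setCone_sum Z _ fun i hi => ?_
      exact setCone_single (ht i) (Or.inl ⟨i, hZmem i hi, rfl⟩)
    rcases eq_or_lt_of_le hAnn with hA0 | hApos
    · -- A = 0 : all coefficients in P and N vanish
      have hP0 : ∀ i ∈ P, t i = 0 := by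
        intro i hi
        have h := (Finset.sum_eq_zero_iff_of_nonneg
          (fun j hj => mul_nonneg (ht j) (hPmem j hj).le)).1 hA0.symm i hi
        rcases mul_eq_zero.1 h with h' | h'
        · exact h'
        · exact absurd h' (hPmem i hi).ne'
      have hN0 : ∀ i ∈ N, t i = 0 := by
        intro i hi
        have hsum0 : ∑ j ∈ N, t j * y j k = 0 := by rw [hBA, ← hA0, neg_zero]
        have h := (Finset.sum_eq_zero_iff_of_nonpos
          (fun j hj => mul_nonpos_of_nonneg_of_nonpos (ht j) (hNmem j hj).le)).1 hsum0 i hi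
        rcases mul_eq_zero.1 h with h' | h'
        · exact h'
        · exact absurd h' (hNmem i hi).ne
      have hPzero : ∑ i ∈ P, t i • y i = 0 :=
        Finset.sum_eq_zero fun i hi => by rw [hP0 i hi, zero_smul]
      have hNzero : ∑ i ∈ N, t i • y i = 0 :=
        Finset.sum_eq_zero fun i hi => by rw [hN0 i hi, zero_smul]
      rw [hsplit (fun i => t i • y i), hPzero, hNzero, add_zero, add_zero]
      exact hZcone
    · -- A > 0 : pair up positive and negative generators
      have hAne : A ≠ 0 := ne_of_gt hApos
      have key : ∑ i ∈ P, ∑ j ∈ N, (t i * t j / A) • ((y i k) • y j - (y j k) • y i)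
          = ∑ i ∈ P, t i • y i + ∑ j ∈ N, t j • y j := by
        have c1 : ∀ j ∈ N, ∑ i ∈ P, (t i * t j / A * y i k) = t j := by
          intro j _
          have : ∑ i ∈ P, (t i * t j / A * y i k) = (∑ i ∈ P, t i * y i k) * (t j / A) := by
            rw [Finset.sum_mul]
            exact Finset.sum_congr rfl fun i _ => by ring
          rw [this, ← hA]
          field_simp
        have c2 : ∀ i ∈ P, ∑ j ∈ N, (t i * t j / A * y j k) = -(t i) := by
          intro i _
          have : ∑ j ∈ N, (t i * t j / A * y j k) = (∑ j ∈ N, t j * y j k) * (t i / A) := by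
            rw [Finset.sum_mul]
            exact Finset.sum_congr rfl fun j _ => by ring
          rw [this, hBA]
          field_simp
        calc ∑ i ∈ P, ∑ j ∈ N, (t i * t j / A) • ((y i k) • y j - (y j k) • y i)
            = ∑ i ∈ P, (∑ j ∈ N, (t i * t j / A * y i k) • y j
              - ∑ j ∈ N, (t i * t j / A * y j k) • y i) := by
              refine Finset.sum_congr rfl fun i _ => ?_
              rw [← Finset.sum_sub_distrib]
              exact Finset.sum_congr rfl fun j _ => by
                rw [smul_sub, smul_smul, smul_smul]
          _ = ∑ i ∈ P, ∑ j ∈ N, (t i * t j / A * y i k) • y j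
              - ∑ i ∈ P, ∑ j ∈ N, (t i * t j / A * y j k) • y i := by
              rw [Finset.sum_sub_distrib]
          _ = ∑ j ∈ N, t j • y j - ∑ i ∈ P, (-(t i)) • y i := by
              congr 1
              · rw [Finset.sum_comm]
                refine Finset.sum_congr rfl fun j hj => ?_
                rw [← Finset.sum_smul, c1 j hj]
              · refine Finset.sum_congr rfl fun i hi => ?_
                rw [← Finset.sum_smul, c2 i hi]
          _ = ∑ i ∈ P, t i • y i + ∑ j ∈ N, t j • y j := by
              simp only [neg_smul, Finset.sum_neg_distrib, sub_neg_eq_add]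
              exact add_comm _ _
      rw [hsplit (fun i => t i • y i), ← key]
      refine setCone_add hZcone (setCone_sum P _ fun i hi => setCone_sum N _ fun j hj => ?_)
      refine setCone_single (div_nonneg (mul_nonneg (ht i) (ht j)) hAnn) ?_
      exact Or.inr ⟨i, j, hPmem i hi, hNmem j hj, rfl⟩
  · -- easy direction
    rintro x ⟨m, c, z, hc, hz, rfl⟩
    constructor
    · refine coneOf_sum Finset.univ _ fun i _ => coneOf_smul (hc i) ?_
      rcases hz i with ⟨j, _, hzj⟩ | ⟨i', j', hi', hj', hzj⟩
      · rw [hzj]; exact coneOf_gen j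
      · rw [hzj]
        have : (y i' k) • y j' - (y j' k) • y i'
            = (y i' k) • y j' + (-(y j' k)) • y i' := by
          rw [neg_smul, ← sub_eq_add_neg]
        rw [this]
        exact coneOf_add (coneOf_smul hi'.le (coneOf_gen j'))
          (coneOf_smul (neg_nonneg.2 hj'.le) (coneOf_gen i'))
    · show (∑ i, c i • z i) k = 0
      rw [WithLp.ofLp_sum, Finset.sum_apply]
      refine Finset.sum_eq_zero fun i _ => ?_
      rcases hz i with ⟨j, hj, hzj⟩ | ⟨i', j', hi', hj', hzj⟩
      · show c i * z i k = 0
        rw [hzj]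
        show c i * y j k = 0
        rw [hj, mul_zero]
      · show c i * z i k = 0
        rw [hzj]
        show c i * (y i' k * y j' k - y j' k * y i' k) = 0
        ring
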